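/- Let r ≥ 2 be an integer, t = exp(iπ/(2r)), and [n] = sin(nπ/r)/sin(π/r) the quantized integer. Then there exists a nonzero constant C ∈ ℂ, independent of j, such that for every j ∈ {1, 2, …, r−1}: Σ_{k=1}^{r−1} [jk]·[k]·t^{−k²} = C·[j]·t^{j²}. (This Gauss-sum identity yields the coefficients of the skein F(T) representing the positive twist in the Reshetikhin–Turaev representation on the torus.) -/

import Mathlib

open Complex



private lemma sum_shift (n : ℕ) (g : ℤ → ℂ) (hg : ∀ m : ℤ, g (m + n) = g m) :
    ∀ a : ℤ, ∑ k ∈ Finset.range n, g (k + a) = ∑ k ∈ Finset.range n, g k := by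
  have step : ∀ a : ℤ, ∑ k ∈ Finset.range n, g (k + (a + 1)) = ∑ k ∈ Finset.range n, g (k + a) := by
    intro a
    have e1 : ∑ k ∈ Finset.range n, g (↑k + (a + 1)) = ∑ k ∈ Finset.range n, g (↑(k + 1) + a) :=
      Finset.sum_congr rfl fun k _ => by push_cast; ring_nf
    have e2 := Finset.sum_range_succ' (fun k : ℕ => g (↑k + a)) n
    have e3 := Finset.sum_range_succ (fun k : ℕ => g (↑k + a)) n
    have e4 : g (↑n + a) = g (↑(0 : ℕ) + a) := by
      push_cast
      rw [zero_add, add_comm, hg]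
    rw [e1]
    have e5 := e2.symm.trans e3
    rw [e4] at e5
    exact add_right_cancel e5
  intro a
  induction a using Int.induction_on with
  | zero => simp
  | succ i ih => rw [step]; exact ih
  | pred i ih =>
    have h := step (-(i : ℤ) - 1)
    have h2 : (-(i : ℤ) - 1) + 1 = -(i : ℤ) := by ring
    rw [h2] at h
    show ∑ k ∈ Finset.range n, g (↑k + (-(i : ℤ) - 1)) = _
    rw [← h]
    exact ih

private lemma range_split (F : ℕ → ℂ) (r : ℕ) (hr : 1 ≤ r) :
    ∑ i ∈ Finset.range (2 * r), F i
      = F 0 + (∑ i ∈ Finset.range (r - 1), F (1 + i)) + F r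
        + ∑ i ∈ Finset.range (r - 1), F (r + 1 + i) := by
  obtain ⟨s, rfl⟩ : ∃ s, r = s + 1 := ⟨r - 1, by omega⟩
  simp only [Nat.add_sub_cancel]
  rw [show 2 * (s + 1) = (s + 1) + (s + 1) by ring, Finset.sum_range_add,
    Finset.sum_range_succ', Finset.sum_range_succ']
  have e1 : ∀ i, F (i + 1) = F (1 + i) := fun i => by rw [add_comm]
  have e2 : ∀ i, F (s + 1 + (i + 1)) = F (s + 1 + 1 + i) := fun i => by ring_nf
  simp only [e1, e2, add_zero]
  ring

private lemma icc_to_range (r : ℕ) (hr : 1 ≤ r) (F : ℕ → ℂ) :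
    ∑ k ∈ Finset.Icc 1 (r - 1), F k = ∑ i ∈ Finset.range (r - 1), F (1 + i) := by
  rw [← Finset.Ico_add_one_right_eq_Icc, Finset.sum_Ico_eq_sum_range]
  simp

/-- The quantized integer `[n] = sin(nπ/r)/sin(π/r)`. -/
noncomputable def qint (r n : ℕ) : ℝ := Real.sin (n * Real.pi / r) / Real.sin (Real.pi / r)

/-- The root of unity `t = exp(iπ/(2r))`. -/
noncomputable def tC (r : ℕ) : ℂ := Complex.exp (Real.pi * Complex.I / (2 * r))

/-- Gauss sum identity: there is a nonzero constant `C`, independent of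
`j`, such that for all `1 ≤ j ≤ r−1`,
`Σ_{k=1}^{r−1} [jk]·[k]·t^{−k²} = C·[j]·t^{j²}`. -/
theorem gauss_sum_twist_coefficients (r : ℕ) (hr : 2 ≤ r) :
    ∃ C : ℂ, C ≠ 0 ∧ ∀ j ∈ Finset.Icc 1 (r - 1),
      ∑ k ∈ Finset.Icc 1 (r - 1),
          (qint r (j * k) : ℂ) * (qint r k : ℂ) * (tC r) ^ (-((k : ℤ) ^ 2)) =
        C * (qint r j : ℂ) * (tC r) ^ ((j : ℤ) ^ 2) := by
  have hr0 : 0 < r := by omega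
  have hrR : (0 : ℝ) < r := by exact_mod_cast hr0
  have hrne : (r : ℂ) ≠ 0 := by
    simp only [ne_eq, Nat.cast_eq_zero]; omega
  set t := tC r with htdef
  have ht : t ≠ 0 := Complex.exp_ne_zero _
  have hmul : ∀ x y : ℤ, t ^ x * t ^ y = t ^ (x + y) := fun x y => (zpow_add₀ ht x y).symm
  have htm : ∀ m : ℤ, t ^ m = Complex.exp (m * (↑Real.pi * I / (2 * r))) := by
    intro m
    rw [htdef, tC, ← Complex.exp_int_mul]
  have ht4 : t ^ ((4 : ℤ) * r) = 1 := by
    rw [htm, show ((4 * r : ℤ) : ℂ) * (↑Real.pi * I / (2 * r)) = 2 * ↑Real.pi * I by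
      push_cast; field_simp; ring]
    exact Complex.exp_two_pi_mul_I
  have hper : ∀ x : ℤ, t ^ (x + 4 * r) = t ^ x := by
    intro x
    rw [← hmul, ht4, mul_one]
  set f : ℤ → ℂ := fun m => t ^ (-(m ^ 2)) with hf
  set g2 : ℤ → ℂ := fun m => t ^ (m ^ 2) with hg2
  have hfe : ∀ m : ℤ, f (-m) = f m := by
    intro m; simp only [hf]; rw [neg_sq]
  have hfp : ∀ m : ℤ, f (m + (2 * r : ℕ)) = f m := by
    intro m
    simp only [hf]
    calc t ^ (-((m + ((2 * r : ℕ) : ℤ)) ^ 2))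
        = t ^ (-(m ^ 2)) * t ^ ((4 * (r : ℤ)) * (-(m + r))) := by
          rw [hmul]; congr 1; push_cast; ring
      _ = t ^ (-(m ^ 2)) := by rw [zpow_mul, ht4, one_zpow, mul_one]
  have hgp : ∀ m : ℤ, g2 (m + (2 * r : ℕ)) = g2 m := by
    intro m
    simp only [hg2]
    calc t ^ ((m + ((2 * r : ℕ) : ℤ)) ^ 2)
        = t ^ (m ^ 2) * t ^ ((4 * (r : ℤ)) * (m + r)) := by
          rw [hmul]; congr 1; push_cast; ring
      _ = t ^ (m ^ 2) := by rw [zpow_mul, ht4, one_zpow, mul_one]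
  -- sine facts
  have hsin_eq : ∀ z : ℂ, Complex.sin z * (2 * I) = Complex.exp (z * I) - Complex.exp (-z * I) := by
    intro z
    calc Complex.sin z * (2 * I)
        = (Complex.exp (-z * I) - Complex.exp (z * I)) * (I * I) := by
          rw [show Complex.sin z = ((Complex.exp (-z * I) - Complex.exp (z * I)) * I) / 2 from rfl]
          ring
      _ = Complex.exp (z * I) - Complex.exp (-z * I) := by rw [Complex.I_mul_I]; ring
  have hsinc : ∀ n : ℕ, (Real.sin (n * Real.pi / r) : ℂ) * (2 * I)
      = t ^ (2 * (n : ℤ)) - t ^ (-(2 * (n : ℤ))) := by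
    intro n
    rw [Complex.ofReal_sin, hsin_eq, htm, htm]
    congr 2
    · push_cast; field_simp
    · push_cast; field_simp
  set D : ℂ := t ^ (2 : ℤ) - t ^ (-2 : ℤ) with hD
  have hsinpos : 0 < Real.sin (Real.pi / r) := by
    apply Real.sin_pos_of_pos_of_lt_pi
    · positivity
    · rw [div_lt_iff₀ hrR]
      have h1 : (1 : ℝ) < r := by exact_mod_cast (by omega : 1 < r)
      nlinarith [Real.pi_pos]
  have hsince : (Real.sin (Real.pi / r) : ℂ) ≠ 0 := by
    simp only [ne_eq, Complex.ofReal_eq_zero]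
    exact ne_of_gt hsinpos
  have hDeq : (Real.sin (Real.pi / r) : ℂ) * (2 * I) = D := by
    have h := hsinc 1
    have h1 : (2 * ((1 : ℕ) : ℤ)) = 2 := by norm_num
    rw [h1, show ((1 : ℕ) : ℝ) * Real.pi / r = Real.pi / r by norm_num] at h
    exact h
  have hDne : D ≠ 0 := by
    rw [← hDeq]
    exact mul_ne_zero hsince (by simp [Complex.I_ne_zero])
  have hq : ∀ n : ℕ, (qint r n : ℂ) * D = t ^ (2 * (n : ℤ)) - t ^ (-(2 * (n : ℤ))) := by
    intro n
    have hcs : Complex.sin ((Real.pi : ℂ) / r) ≠ 0 := by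
      rw [show ((Real.pi : ℂ) / r) = ((Real.pi / r : ℝ) : ℂ) by push_cast; ring,
        ← Complex.ofReal_sin]
      exact hsince
    rw [← hsinc n, qint, Complex.ofReal_div, ← hDeq]
    field_simp
  set G : ℂ := ∑ k ∈ Finset.range (2 * r), f k with hG
  set G2 : ℂ := ∑ k ∈ Finset.range (2 * r), g2 k with hG2
  -- conj
  have hconj_t : (starRingEnd ℂ) t = t⁻¹ := by
    rw [htdef, tC, ← Complex.exp_conj, ← Complex.exp_neg]
    congr 1
    simp [map_div₀, Complex.conj_I, Complex.conj_ofReal, map_ofNat]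
    ring
  have hconjG : (starRingEnd ℂ) G = G2 := by
    rw [hG, hG2, map_sum]
    apply Finset.sum_congr rfl
    intro k _
    simp only [hf, hg2]
    rw [map_zpow₀, hconj_t, inv_zpow', neg_neg]
  -- geometric sum facts
  have hgeom : ∀ n : ℕ, 0 < n → n < 2 * r →
      ∑ m ∈ Finset.range (2 * r), (t ^ (2 * (n : ℤ))) ^ m = 0 := by
    intro n hn1 hn2
    have hne1 : t ^ (2 * (n : ℤ)) ≠ 1 := by
      intro hcon
      rw [htm, Complex.exp_eq_one_iff] at hcon
      obtain ⟨k, hk⟩ := hcon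
      have hπ : (Real.pi : ℂ) ≠ 0 := Complex.ofReal_ne_zero.2 Real.pi_ne_zero
      have hc : ((n : ℂ)) = 2 * k * r := by
        field_simp at hk
        have h2 : ((n : ℂ) - 2 * k * r) * (↑Real.pi * I) = 0 := by
          push_cast at hk; linear_combination (↑Real.pi * I) * hk / 2
        rcases mul_eq_zero.1 h2 with h | h
        · exact sub_eq_zero.1 h
        · exact absurd h (mul_ne_zero hπ Complex.I_ne_zero)
      have hcz : (n : ℤ) = 2 * k * r := by exact_mod_cast hc
      have hb1 : (1 : ℤ) ≤ n := by exact_mod_cast hn1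
      have hb2 : (n : ℤ) < 2 * r := by exact_mod_cast hn2
      have hrz : (2 : ℤ) ≤ r := by exact_mod_cast hr
      rcases le_or_gt k 0 with hk0 | hk0
      · nlinarith
      · nlinarith
    rw [geom_sum_eq hne1]
    have : (t ^ (2 * (n : ℤ))) ^ (2 * r) = 1 := by
      rw [← zpow_natCast (t ^ (2 * (n:ℤ))) (2*r), ← zpow_mul]
      rw [show 2 * (n : ℤ) * ((2 * r : ℕ) : ℤ) = 4 * (r : ℤ) * n by push_cast; ring]
      rw [zpow_mul, ht4, one_zpow]
    rw [this]
    simp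
  -- |G|^2 = 2r
  have hGG : G * G2 = 2 * r := by
    rw [hG, Finset.sum_mul]
    have key : ∀ m ∈ Finset.range (2 * r), f m * G2
        = ∑ n ∈ Finset.range (2 * r), g2 n * (t ^ (2 * (n : ℤ))) ^ m := by
      intro m _
      rw [hG2, ← sum_shift (2 * r) g2 hgp (m : ℤ), Finset.mul_sum]
      apply Finset.sum_congr rfl
      intro n _
      simp only [hf, hg2]
      rw [hmul, ← zpow_natCast (t ^ (2 * (n : ℤ))) m, ← zpow_mul, hmul]
      congr 1
      push_cast
      ring
    rw [Finset.sum_congr rfl key, Finset.sum_comm]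
    have key2 : ∀ n ∈ Finset.range (2 * r),
        ∑ m ∈ Finset.range (2 * r), g2 n * (t ^ (2 * (n : ℤ))) ^ m
          = if n = 0 then (2 * r : ℂ) else 0 := by
      intro n hn
      rw [← Finset.mul_sum]
      by_cases h0 : n = 0
      · subst h0
        simp [hg2]
      · rw [if_neg h0, hgeom n (Nat.pos_of_ne_zero h0) (Finset.mem_range.1 hn), mul_zero]
    rw [Finset.sum_congr rfl key2, Finset.sum_ite_eq' (Finset.range (2 * r)) 0 (fun _ => (2 * r : ℂ))]
    simp
  have hGne : G ≠ 0 := by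
    intro h0
    rw [h0, zero_mul] at hGG
    have : (2 * r : ℂ) ≠ 0 := by
      simp only [ne_eq, mul_eq_zero]
      push_neg
      exact ⟨two_ne_zero, hrne⟩
    exact this hGG.symm
  -- the symmetric pair sum
  have hE : ∀ a : ℤ, ∑ k ∈ Finset.Icc 1 (r - 1), (f (↑k - a) + f (↑k + a))
      = G - f a - f (↑r + a) := by
    intro a
    rw [Finset.sum_add_distrib]
    rw [icc_to_range r (by omega) (fun k => f (↑k - a)),
        icc_to_range r (by omega) (fun k => f (↑k + a))]
    have part1 : ∑ i ∈ Finset.range (r - 1), f (↑(1 + i) - a)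
        = ∑ i ∈ Finset.range (r - 1), f (↑(r + 1 + i) + a) := by
      rw [← Finset.sum_range_reflect]
      apply Finset.sum_congr rfl
      intro i hi
      have hi' : i < r - 1 := Finset.mem_range.1 hi
      have hc : ((1 + (r - 1 - 1 - i) : ℕ) : ℤ) = (r : ℤ) - 1 - i := by omega
      rw [hc]
      rw [show ((r : ℤ) - 1 - (i : ℤ) - a) = -((((r : ℕ) + 1 + i : ℕ) : ℤ) + a) + ((2 * r : ℕ) : ℤ) by
        push_cast; ring]
      rw [hfp, hfe]
    rw [part1]
    have hsplit := range_split (fun i => f (↑i + a)) r (by omega)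
    have hshift := sum_shift (2 * r) f hfp a
    simp only [Nat.cast_zero, zero_add] at hsplit
    linear_combination hshift - hsplit - hG
  -- two elementary exponent lemmas
  have hfa : ∀ a c : ℤ, (f (c - a) + f (c + a)) * t ^ (a ^ 2)
      = t ^ (-(c ^ 2)) * (t ^ (2 * a * c) + t ^ (-(2 * a * c))) := by
    intro a c
    simp only [hf]
    rw [add_mul, hmul, hmul, mul_add, hmul, hmul]
    congr 1
    · congr 1; ring
    · congr 1; ring
  have hx : ∀ x y : ℤ, (t ^ x - t ^ (-x)) * (t ^ y - t ^ (-y))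
      = t ^ (x + y) + t ^ (-(x + y)) - t ^ (x + -y) - t ^ (-x + y) := by
    intro x y
    rw [sub_mul, mul_sub, mul_sub, hmul, hmul, hmul, hmul]
    rw [show -x + -y = -(x + y) by ring]
    ring
  -- the constant
  refine ⟨G * t / D, div_ne_zero (mul_ne_zero hGne ht) hDne, ?_⟩
  intro j hj
  obtain ⟨hj1, hj2⟩ := Finset.mem_Icc.1 hj
  have hterm : ∀ k : ℕ,
      (qint r (j * k) : ℂ) * (qint r k : ℂ) * t ^ (-((k : ℤ) ^ 2)) * (D * D)
        = (f ((k : ℤ) - ((j : ℤ) + 1)) + f ((k : ℤ) + ((j : ℤ) + 1))) * t ^ (((j : ℤ) + 1) ^ 2)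
          - (f ((k : ℤ) - ((j : ℤ) - 1)) + f ((k : ℤ) + ((j : ℤ) - 1))) * t ^ (((j : ℤ) - 1) ^ 2) := by
    intro k
    have h1 := hq (j * k)
    have h2 := hq k
    have hL : (qint r (j * k) : ℂ) * (qint r k : ℂ) * t ^ (-((k : ℤ) ^ 2)) * (D * D)
        = ((qint r (j * k) : ℂ) * D) * ((qint r k : ℂ) * D) * t ^ (-((k : ℤ) ^ 2)) := by ring
    rw [hL, h1, h2, hfa ((j : ℤ) + 1) (k : ℤ), hfa ((j : ℤ) - 1) (k : ℤ)]
    rw [show (2 * ((j * k : ℕ) : ℤ)) = 2 * (j : ℤ) * (k : ℤ) by push_cast; ring]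
    rw [hx (2 * (j : ℤ) * (k : ℤ)) (2 * (k : ℤ))]
    rw [show 2 * ((j : ℤ) + 1) * (k : ℤ) = 2 * (j : ℤ) * (k : ℤ) + 2 * (k : ℤ) by ring,
        show 2 * ((j : ℤ) - 1) * (k : ℤ) = 2 * (j : ℤ) * (k : ℤ) + -(2 * (k : ℤ)) by ring,
        show (-(2 * (j : ℤ) * (k : ℤ)) + 2 * (k : ℤ)) = -(2 * (j : ℤ) * (k : ℤ) + -(2 * (k : ℤ))) by ring]
    ring
  have hsum : (∑ k ∈ Finset.Icc 1 (r - 1),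
        (qint r (j * k) : ℂ) * (qint r k : ℂ) * t ^ (-((k : ℤ) ^ 2))) * (D * D)
      = (G - f ((j : ℤ) + 1) - f (↑r + ((j : ℤ) + 1))) * t ^ (((j : ℤ) + 1) ^ 2)
        - (G - f ((j : ℤ) - 1) - f (↑r + ((j : ℤ) - 1))) * t ^ (((j : ℤ) - 1) ^ 2) := by
    rw [Finset.sum_mul]
    rw [Finset.sum_congr rfl (fun k _ => hterm k)]
    rw [Finset.sum_sub_distrib, ← Finset.sum_mul, ← Finset.sum_mul,
      hE ((j : ℤ) + 1), hE ((j : ℤ) - 1)]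
  have hfa1 : f ((j : ℤ) + 1) * t ^ (((j : ℤ) + 1) ^ 2) = 1 := by
    simp only [hf]
    rw [hmul, show -(((j : ℤ) + 1) ^ 2) + ((j : ℤ) + 1) ^ 2 = 0 by ring, zpow_zero]
  have hfb1 : f ((j : ℤ) - 1) * t ^ (((j : ℤ) - 1) ^ 2) = 1 := by
    simp only [hf]
    rw [hmul, show -(((j : ℤ) - 1) ^ 2) + ((j : ℤ) - 1) ^ 2 = 0 by ring, zpow_zero]
  have hcan : f (↑r + ((j : ℤ) - 1)) * t ^ (((j : ℤ) - 1) ^ 2)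
      = f (↑r + ((j : ℤ) + 1)) * t ^ (((j : ℤ) + 1) ^ 2) := by
    simp only [hf]
    rw [hmul, hmul]
    rw [show -(((r : ℤ) + ((j : ℤ) - 1)) ^ 2) + ((j : ℤ) - 1) ^ 2
        = (-(((r : ℤ) + ((j : ℤ) + 1)) ^ 2) + ((j : ℤ) + 1) ^ 2) + 4 * (r : ℤ) by ring]
    exact hper _
  have hsum2 : (∑ k ∈ Finset.Icc 1 (r - 1),
        (qint r (j * k) : ℂ) * (qint r k : ℂ) * t ^ (-((k : ℤ) ^ 2))) * (D * D)
      = G * (t ^ (((j : ℤ) + 1) ^ 2) - t ^ (((j : ℤ) - 1) ^ 2)) := by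
    linear_combination hsum - hfa1 + hfb1 + hcan
  apply mul_right_cancel₀ (mul_ne_zero hDne hDne)
  rw [hsum2]
  have hqj := hq j
  have expand : t ^ (((j : ℤ) + 1) ^ 2) - t ^ (((j : ℤ) - 1) ^ 2)
      = t * ((t ^ (2 * ((j : ℕ) : ℤ)) - t ^ (-(2 * ((j : ℕ) : ℤ)))) * t ^ ((j : ℤ) ^ 2)) := by
    rw [show (((j : ℤ) + 1) ^ 2) = 1 + (2 * (j : ℤ) + (j : ℤ) ^ 2) by ring,
        show (((j : ℤ) - 1) ^ 2) = 1 + (-(2 * (j : ℤ)) + (j : ℤ) ^ 2) by ring,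
        ← hmul, ← hmul, ← hmul, ← hmul, zpow_one]
    ring
  rw [expand, ← hqj]
  field_simp
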